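/- Let ℓ₁, …, ℓ_n be real numbers, not all equal, δ > 0, and suppose β* < -max_i ℓ_i satisfies Ψ(β*) = 0, where Ψ is as defined previously. Set ω*_i = (ℓ_i + β*)^{-1} / ∑_{k=1}^n (ℓ_k + β*)^{-1}. Then ω* maximizes ∑_{i=1}^n ω_i ℓ_i over all probability vectors ω with -(1/n) ∑_{i=1}^n log(n ω_i) ≤ δ. -/

import Mathlib

/-- If `β*` in the domain is a root of `Ψ`, then the weights
`ω* i = (ℓ i + β*)⁻¹ / ∑ (ℓ k + β*)⁻¹` maximize `∑ ω i * ℓ i` over all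
probability vectors in the KL ball of radius `δ`. -/
theorem stmt_6 (n : ℕ) (hn : 0 < n) (ℓ : Fin n → ℝ)
    (hne : ¬ ∀ i j, ℓ i = ℓ j) (δ : ℝ) (hδ : 0 < δ)
    (β : ℝ) (hβ : ∀ i, β < -ℓ i)
    (hroot : (1 / (n : ℝ)) * ∑ i, Real.log (-1 / (ℓ i + β)) -
        Real.log ((1 / (n : ℝ)) * ∑ i, -1 / (ℓ i + β)) + δ = 0)
    (ωstar : Fin n → ℝ)
    (hωstar : ∀ i, ωstar i = (ℓ i + β)⁻¹ / ∑ k, (ℓ k + β)⁻¹) :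
    ∀ ω : Fin n → ℝ, (∀ i, 0 < ω i) → ∑ i, ω i = 1 →
      -(1 / (n : ℝ)) * ∑ i, Real.log ((n : ℝ) * ω i) ≤ δ →
      ∑ i, ω i * ℓ i ≤ ∑ i, ωstar i * ℓ i := by
  intro ω hωpos hωsum hωkl
  have hn' : (0:ℝ) < n := Nat.cast_pos.mpr hn
  have hnne : (n:ℝ) ≠ 0 := ne_of_gt hn'
  have hlb : ∀ i, ℓ i + β < 0 := fun i => by linarith [hβ i]
  have hlbne : ∀ i, ℓ i + β ≠ 0 := fun i => ne_of_lt (hlb i)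
  have hfrac : ∀ i, (0:ℝ) < -1 / (ℓ i + β) :=
    fun i => div_pos_of_neg_of_neg (by norm_num) (hlb i)
  set S : ℝ := ∑ k, (ℓ k + β)⁻¹ with hS
  have hSneg : S < 0 := by
    apply Finset.sum_neg (fun i _ => inv_neg''.mpr (hlb i)) ⟨⟨0, hn⟩, Finset.mem_univ _⟩
  have hSne : S ≠ 0 := ne_of_lt hSneg
  have hSpos : (0:ℝ) < -1 / S := div_pos_of_neg_of_neg (by norm_num) hSneg
  have hstarpos : ∀ i, 0 < ωstar i := fun i => by
    rw [hωstar i]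
    exact div_pos_of_neg_of_neg (inv_neg''.mpr (hlb i)) hSneg
  have hstarsum : ∑ i, ωstar i = 1 := by
    simp_rw [hωstar]
    rw [← Finset.sum_div, div_self hSne]
  set M : ℝ := (1 / (n:ℝ)) * ∑ i, -1 / (ℓ i + β) with hM
  have hsumneg : ∑ i, -1 / (ℓ i + β) = -S := by
    rw [hS, ← Finset.sum_neg_distrib]
    congr 1; ext i; field_simp
  have hMpos : 0 < M := by
    rw [hM, hsumneg]
    apply mul_pos (by positivity)
    linarith
  have hnωstar : ∀ i, (n:ℝ) * ωstar i = (-1/(ℓ i + β)) / M := by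
    intro i
    rw [hωstar i, hM, hsumneg]
    field_simp
  have hlogstar : ∀ i, Real.log ((n:ℝ) * ωstar i)
      = Real.log (-1/(ℓ i + β)) - Real.log M := by
    intro i
    rw [hnωstar i, Real.log_div (ne_of_gt (hfrac i)) (ne_of_gt hMpos)]
  have hsumlogstar : ∑ i, Real.log ((n:ℝ) * ωstar i) = -(n:ℝ) * δ := by
    simp_rw [hlogstar]
    rw [Finset.sum_sub_distrib, Finset.sum_const, Finset.card_univ, Fintype.card_fin,
      nsmul_eq_mul]
    have h1 : ∑ i, Real.log (-1 / (ℓ i + β)) = (n:ℝ) * (Real.log M - δ) := by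
      have h := hroot
      field_simp at h ⊢
      linarith
    rw [h1]; ring
  have hkey : ∀ i, (ω i - ωstar i) * (ℓ i + β)
      ≤ (-1/S) * (Real.log ((n:ℝ) * ωstar i) - Real.log ((n:ℝ) * ω i)) := by
    intro i
    have hx : 0 < ω i / ωstar i := div_pos (hωpos i) (hstarpos i)
    have hlog : Real.log (ω i / ωstar i) ≤ ω i / ωstar i - 1 :=
      Real.log_le_sub_one_of_pos hx
    have hlogd : Real.log ((n:ℝ) * ωstar i) - Real.log ((n:ℝ) * ω i)
        = - Real.log (ω i / ωstar i) := by
      rw [Real.log_mul hnne (ne_of_gt (hstarpos i)),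
        Real.log_mul hnne (ne_of_gt (hωpos i)),
        Real.log_div (ne_of_gt (hωpos i)) (ne_of_gt (hstarpos i))]
      ring
    have hprod : (ℓ i + β) * ωstar i = 1 / S := by
      rw [hωstar i]
      field_simp
      exact div_self (hlbne i)
    have hlhs : (ω i - ωstar i) * (ℓ i + β) = (-1/S) * (1 - ω i / ωstar i) := by
      have hst : ωstar i ≠ 0 := ne_of_gt (hstarpos i)
      field_simp
      linear_combination (S * (ω i - ωstar i)) * hprod + (ω i - ωstar i) * (mul_inv_cancel₀ hSne)
    rw [hlhs, hlogd]
    apply mul_le_mul_of_nonneg_left _ (le_of_lt hSpos)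
    linarith
  have hsum1 : ∑ i, (ω i - ωstar i) * (ℓ i + β)
      ≤ (-1/S) * (∑ i, Real.log ((n:ℝ) * ωstar i) - ∑ i, Real.log ((n:ℝ) * ω i)) := by
    calc ∑ i, (ω i - ωstar i) * (ℓ i + β)
        ≤ ∑ i, (-1/S) * (Real.log ((n:ℝ) * ωstar i) - Real.log ((n:ℝ) * ω i)) :=
          Finset.sum_le_sum (fun i _ => hkey i)
      _ = _ := by rw [← Finset.mul_sum, Finset.sum_sub_distrib]
  have hlogω : -(n:ℝ) * δ ≤ ∑ i, Real.log ((n:ℝ) * ω i) := by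
    have hid : (n:ℝ) * (-(1 / (n:ℝ)) * ∑ i, Real.log ((n:ℝ) * ω i))
        = -∑ i, Real.log ((n:ℝ) * ω i) := by
      field_simp
    linarith [mul_le_mul_of_nonneg_left hωkl hn'.le, hid]
  have hrhs : (-1/S) * (∑ i, Real.log ((n:ℝ) * ωstar i) - ∑ i, Real.log ((n:ℝ) * ω i)) ≤ 0 := by
    apply mul_nonpos_of_nonneg_of_nonpos hSpos.le
    rw [hsumlogstar]
    linarith
  have hfinal : ∑ i, (ω i - ωstar i) * (ℓ i + β) ≤ 0 := le_trans hsum1 hrhs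
  have hexp : ∑ i, (ω i - ωstar i) * (ℓ i + β)
      = ((∑ i, ω i * ℓ i) - ∑ i, ωstar i * ℓ i)
        + β * ((∑ i, ω i) - ∑ i, ωstar i) := by
    calc ∑ i, (ω i - ωstar i) * (ℓ i + β)
        = ∑ i, ((ω i * ℓ i - ωstar i * ℓ i) + (β * ω i - β * ωstar i)) := by
          apply Finset.sum_congr rfl; intros; ring
      _ = _ := by
          rw [Finset.sum_add_distrib, Finset.sum_sub_distrib, Finset.sum_sub_distrib,
            ← Finset.mul_sum, ← Finset.mul_sum]
          ring
  rw [hexp, hωsum, hstarsum] at hfinal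
  linarith
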